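/- Let R = A·Λ·Aᴴ + σ²·I_M where A ∈ ℂ^(M×n) has full column rank, Λ ∈ ℂ^(n×n) is diagonal with strictly positive diagonal entries, and σ² > 0. If E_s ∈ ℂ^(M×n) consists of orthonormal eigenvectors of R corresponding to the n eigenvalues larger than σ², then the column space of E_s equals the column space of A; equivalently, there exists an invertible matrix T ∈ ℂ^(n×n) with A = E_s·T. -/

import Mathlib

open scoped ComplexOrder

open Matrix

theorem stmt4 (M n : ℕ) (A : Matrix (Fin M) (Fin n) ℂ) (hA : A.rank = n)
    (Λ : Matrix (Fin n) (Fin n) ℂ)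
    (hdiag : ∀ i j, i ≠ j → Λ i j = 0)
    (hpos : ∀ i, 0 < (Λ i i).re ∧ (Λ i i).im = 0)
    (σ2 : ℝ) (hσ : 0 < σ2)
    (Es : Matrix (Fin M) (Fin n) ℂ)
    (horth : Esᴴ * Es = 1)
    (μ : Fin n → ℝ) (hμ : ∀ j, σ2 < μ j)
    (heig : ∀ j, (A * Λ * Aᴴ + (σ2 : ℂ) • (1 : Matrix (Fin M) (Fin M) ℂ)).mulVec
        (fun i => Es i j) = fun i => (μ j : ℂ) * Es i j) :
    ∃ T : Matrix (Fin n) (Fin n) ℂ, IsUnit T.det ∧ A = Es * T := by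
  set d : Fin n → ℂ := fun j => (μ j : ℂ) - (σ2 : ℂ) with hd
  have hdne : ∀ j, d j ≠ 0 := by
    intro j h
    have : (μ j : ℂ) = (σ2 : ℂ) := by
      have := sub_eq_zero.mp h
      exact this
    have hμσ := hμ j
    have : μ j = σ2 := by exact_mod_cast this
    linarith
  -- key matrix identity
  have hkey : (A * Λ * Aᴴ) * Es = Es * Matrix.diagonal d := by
    ext i j
    have h := congrFun (heig j) i
    simp only [add_mulVec, smul_mulVec, one_mulVec, Pi.add_apply, Pi.smul_apply,
      smul_eq_mul] at h
    have hmv : ((A * Λ * Aᴴ) * Es) i j = (A * Λ * Aᴴ).mulVec (fun i => Es i j) i := by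
      simp [Matrix.mul_apply, Matrix.mulVec, dotProduct]
    rw [hmv]
    have : (A * Λ * Aᴴ).mulVec (fun i => Es i j) i = (μ j : ℂ) * Es i j - (σ2 : ℂ) * Es i j := by
      linear_combination h
    rw [this]
    simp [Matrix.mul_apply, Matrix.diagonal, hd]
    ring
  obtain ⟨S, hS⟩ : ∃ S : Matrix (Fin n) (Fin n) ℂ,
      S = Λ * Aᴴ * Es * Matrix.diagonal (fun j => (d j)⁻¹) := ⟨_, rfl⟩
  have hES : A * S = Es := by
    rw [hS]
    have : A * (Λ * Aᴴ * Es * Matrix.diagonal fun j => (d j)⁻¹)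
        = ((A * Λ * Aᴴ) * Es) * Matrix.diagonal (fun j => (d j)⁻¹) := by
      simp only [Matrix.mul_assoc]
    rw [this, hkey, Matrix.mul_assoc, Matrix.diagonal_mul_diagonal]
    have : (Matrix.diagonal fun j => d j * (d j)⁻¹) = (1 : Matrix (Fin n) (Fin n) ℂ) := by
      rw [show (fun j => d j * (d j)⁻¹) = fun _ : Fin n => (1 : ℂ) from
        funext fun j => mul_inv_cancel₀ (hdne j), Matrix.diagonal_one]
    rw [this, Matrix.mul_one]
  have hone : Sᴴ * (Aᴴ * A) * S = 1 := by
    calc Sᴴ * (Aᴴ * A) * S = (A * S)ᴴ * (A * S) := by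
          rw [Matrix.conjTranspose_mul]; simp only [Matrix.mul_assoc]
      _ = Esᴴ * Es := by rw [hES]
      _ = 1 := horth
  have hdet : Sᴴ.det * (Aᴴ * A).det * S.det = 1 := by
    have := congrArg Matrix.det hone
    simpa [Matrix.det_mul] using this
  have hSunit : IsUnit S.det := by
    apply IsUnit.of_mul_eq_one (Sᴴ.det * (Aᴴ * A).det)
    linear_combination hdet
  refine ⟨S⁻¹, ?_, ?_⟩
  · exact Matrix.isUnit_nonsing_inv_det _ hSunit
  · rw [← hES, Matrix.mul_assoc, Matrix.mul_nonsing_inv _ hSunit, Matrix.mul_one]
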